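/- Maximum conversion probability under the Z₂-SSR: Let (p₀,p₁) and (q₀,q₁) be standard-form weight pairs of Z₂-noninvariant pure states with min(p₀,p₁) < min(q₀,q₁). Then the set of achievable conversion probabilities { λ : ℝ | there exist a finite index set and, for each index i, a bit B_i ∈ {0,1}, nonnegative coefficients c₀_i, c₁_i with ∑_i (c₀_i)² ≤ 1 and ∑_i (c₁_i)² ≤ 1, and v_i ≥ 0 such that for each i: if B_i = 0 then (c₀_i)²·p₀ = v_i·q₀ and (c₁_i)²·p₁ = v_i·q₁, while if B_i = 1 then (c₀_i)²·p₀ = v_i·q₁ and (c₁_i)²·p₁ = v_i·q₀; and λ = ∑_i v_i } has greatest element min(p₀,p₁)/min(q₀,q₁) = C(p₀,p₁)/C(q₀,q₁). -/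

import Mathlib

lemma z2_mem (p₀ p₁ q₀ q₁ : ℝ) (B : Bool) (v r₀ r₁ : ℝ)
    (hv : 0 ≤ v) (hr₀ : 0 ≤ r₀) (hr₁ : 0 ≤ r₁) (h₀ : r₀ ≤ 1) (h₁ : r₁ ≤ 1)
    (heq : if B then r₀ * p₀ = v * q₁ ∧ r₁ * p₁ = v * q₀
           else r₀ * p₀ = v * q₀ ∧ r₁ * p₁ = v * q₁) :
    v ∈ {lam : ℝ | ∃ (n : ℕ) (B : Fin n → Bool) (c₀ c₁ v : Fin n → ℝ),
        (∀ i, 0 ≤ c₀ i) ∧ (∀ i, 0 ≤ c₁ i) ∧ (∀ i, 0 ≤ v i) ∧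
        (∑ i, (c₀ i) ^ 2 ≤ 1) ∧ (∑ i, (c₁ i) ^ 2 ≤ 1) ∧
        (∀ i, if B i then
            (c₀ i) ^ 2 * p₀ = v i * q₁ ∧ (c₁ i) ^ 2 * p₁ = v i * q₀
          else
            (c₀ i) ^ 2 * p₀ = v i * q₀ ∧ (c₁ i) ^ 2 * p₁ = v i * q₁) ∧
        lam = ∑ i, v i} := by
  refine ⟨1, fun _ => B, fun _ => Real.sqrt r₀, fun _ => Real.sqrt r₁, fun _ => v,
    fun _ => Real.sqrt_nonneg _, fun _ => Real.sqrt_nonneg _, fun _ => hv, ?_, ?_, ?_, ?_⟩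
  · simpa [Real.sq_sqrt hr₀] using h₀
  · simpa [Real.sq_sqrt hr₁] using h₁
  · intro i
    simpa [Real.sq_sqrt hr₀, Real.sq_sqrt hr₁] using heq
  · simp

theorem z2_max_probability
    (p₀ p₁ q₀ q₁ : ℝ)
    (hp₀ : 0 < p₀) (hp₁ : 0 < p₁) (hp : p₀ + p₁ = 1)
    (hq₀ : 0 < q₀) (hq₁ : 0 < q₁) (hq : q₀ + q₁ = 1)
    (hlt : min p₀ p₁ < min q₀ q₁) :
    IsGreatest
      {lam : ℝ | ∃ (n : ℕ) (B : Fin n → Bool) (c₀ c₁ v : Fin n → ℝ),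
        (∀ i, 0 ≤ c₀ i) ∧ (∀ i, 0 ≤ c₁ i) ∧ (∀ i, 0 ≤ v i) ∧
        (∑ i, (c₀ i) ^ 2 ≤ 1) ∧ (∑ i, (c₁ i) ^ 2 ≤ 1) ∧
        (∀ i, if B i then
            (c₀ i) ^ 2 * p₀ = v i * q₁ ∧ (c₁ i) ^ 2 * p₁ = v i * q₀
          else
            (c₀ i) ^ 2 * p₀ = v i * q₀ ∧ (c₁ i) ^ 2 * p₁ = v i * q₁) ∧
        lam = ∑ i, v i}
      (min p₀ p₁ / min q₀ q₁) := by
  have hM : 0 < min q₀ q₁ := lt_min hq₀ hq₁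
  have hm : 0 < min p₀ p₁ := lt_min hp₀ hp₁
  constructor
  · -- membership
    rcases le_total p₀ p₁ with hP | hP <;> rcases le_total q₀ q₁ with hQ | hQ
    · -- min p = p₀, min q = q₀, B = false
      rw [min_eq_left hP, min_eq_left hQ]
      have h1 : p₀ < q₀ := by
        simpa [min_eq_left hP, min_eq_left hQ] using hlt
      have h2 : q₁ ≤ p₁ := by linarith
      apply z2_mem p₀ p₁ q₀ q₁ false (p₀/q₀) 1 (p₀*q₁/(q₀*p₁))
      · positivity
      · norm_num
      · positivity
      · norm_num
      · rw [div_le_one (by positivity)]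
        nlinarith
      · constructor
        · field_simp
        · field_simp; try ring
    · -- min p = p₀, min q = q₁, B = true
      rw [min_eq_left hP, min_eq_right hQ]
      have h1 : p₀ < q₁ := by
        simpa [min_eq_left hP, min_eq_right hQ] using hlt
      have h2 : q₀ ≤ p₁ := by linarith
      apply z2_mem p₀ p₁ q₀ q₁ true (p₀/q₁) 1 (p₀*q₀/(q₁*p₁))
      · positivity
      · norm_num
      · positivity
      · norm_num
      · rw [div_le_one (by positivity)]
        nlinarith
      · constructor
        · field_simp
        · field_simp; try ring
    · -- min p = p₁, min q = q₀, B = true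
      rw [min_eq_right hP, min_eq_left hQ]
      have h1 : p₁ < q₀ := by
        simpa [min_eq_right hP, min_eq_left hQ] using hlt
      have h2 : q₁ ≤ p₀ := by linarith
      apply z2_mem p₀ p₁ q₀ q₁ true (p₁/q₀) (p₁*q₁/(q₀*p₀)) 1
      · positivity
      · positivity
      · norm_num
      · rw [div_le_one (by positivity)]
        nlinarith
      · norm_num
      · constructor
        · field_simp; try ring
        · field_simp
    · -- min p = p₁, min q = q₁, B = false
      rw [min_eq_right hP, min_eq_right hQ]
      have h1 : p₁ < q₁ := by
        simpa [min_eq_right hP, min_eq_right hQ] using hlt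
      have h2 : q₀ ≤ p₀ := by linarith
      apply z2_mem p₀ p₁ q₀ q₁ false (p₁/q₁) (p₁*q₀/(q₁*p₀)) 1
      · positivity
      · positivity
      · norm_num
      · rw [div_le_one (by positivity)]
        nlinarith
      · norm_num
      · constructor
        · field_simp; try ring
        · field_simp
  · -- upper bound
    rintro lam ⟨n, B, c₀, c₁, v, h0, h1, h2, h4, h5, h6, rfl⟩
    have key0 : ∀ i, v i * min q₀ q₁ ≤ (c₀ i) ^ 2 * p₀ := by
      intro i
      have := h6 i
      cases hB : B i <;> simp [hB] at this
      · rw [this.1]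
        exact mul_le_mul_of_nonneg_left (min_le_left _ _) (h2 i)
      · rw [this.1]
        exact mul_le_mul_of_nonneg_left (min_le_right _ _) (h2 i)
    have key1 : ∀ i, v i * min q₀ q₁ ≤ (c₁ i) ^ 2 * p₁ := by
      intro i
      have := h6 i
      cases hB : B i <;> simp [hB] at this
      · rw [this.2]
        exact mul_le_mul_of_nonneg_left (min_le_right _ _) (h2 i)
      · rw [this.2]
        exact mul_le_mul_of_nonneg_left (min_le_left _ _) (h2 i)
    have s0 : (∑ i, v i) * min q₀ q₁ ≤ p₀ := by
      rw [Finset.sum_mul]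
      calc ∑ i, v i * min q₀ q₁ ≤ ∑ i, (c₀ i) ^ 2 * p₀ :=
            Finset.sum_le_sum fun i _ => key0 i
        _ = (∑ i, (c₀ i) ^ 2) * p₀ := (Finset.sum_mul _ _ _).symm
        _ ≤ 1 * p₀ := mul_le_mul_of_nonneg_right h4 hp₀.le
        _ = p₀ := one_mul _
    have s1 : (∑ i, v i) * min q₀ q₁ ≤ p₁ := by
      rw [Finset.sum_mul]
      calc ∑ i, v i * min q₀ q₁ ≤ ∑ i, (c₁ i) ^ 2 * p₁ :=
            Finset.sum_le_sum fun i _ => key1 i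
        _ = (∑ i, (c₁ i) ^ 2) * p₁ := (Finset.sum_mul _ _ _).symm
        _ ≤ 1 * p₁ := mul_le_mul_of_nonneg_right h5 hp₁.le
        _ = p₁ := one_mul _
    rw [le_div_iff₀ hM]
    exact le_min s0 s1
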